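/- For n ≥ 3 and any 1 ≤ L ≤ n, the L-reversal Dirichlet form of the adjacency indicator χ satisfies E(χ,χ) ≤ 16/(n(n−1)). -/

import Mathlib

def segRev {n : ℕ} {α : Type*} (x h : ℕ) (η : Fin n → α) : Fin n → α := fun y =>
  if (y.val + n - x % n) % n ≤ h then
    η ⟨(x + h - (y.val + n - x % n) % n) % n, Nat.mod_lt _ y.pos⟩
  else η y

/-- Letters `0` and `1` occupy adjacent vertices of the `n`-cycle. -/
def adjLet {n : ℕ} (η : Fin n → Fin n) : Prop :=
  ∃ x y : Fin n, (η x).val = 0 ∧ (η y).val = 1 ∧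
    ((x.val + 1) % n = y.val ∨ (y.val + 1) % n = x.val)

instance {n : ℕ} : DecidablePred (adjLet (n := n)) := fun η => by
  unfold adjLet; infer_instance

/-- The indicator `χ` of the adjacency event. -/
def chiInd {n : ℕ} (η : Fin n → Fin n) : ℝ := if adjLet η then 1 else 0

/-- The `L`-reversal Dirichlet form `E(f,f) = (1/(2nL)) Σ_x Σ_{ℓ≤L} ν[(R_{x,ℓ} f)²]`. -/
noncomputable def dirL (n L : ℕ) (f : (Fin n → Fin n) → ℝ) : ℝ :=
  (1 / (2 * (n : ℝ) * (L : ℝ))) * ∑ x ∈ Finset.range n, ∑ ℓ ∈ Finset.Icc 1 L,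
    (∑ η : Equiv.Perm (Fin n), (f (segRev x ℓ ⇑η) - f ⇑η) ^ 2) / (Nat.factorial n : ℝ)

section zmod
variable {n : ℕ} [NeZero n] {α : Type*}

def zf (z : ZMod n) : Fin n := ⟨z.val, ZMod.val_lt z⟩

lemma zf_cast (z : ZMod n) : (((zf z).val : ℕ) : ZMod n) = z := by
  simp [zf, ZMod.natCast_val, ZMod.cast_id]

lemma zf_fin (y : Fin n) : zf ((y.val : ℕ) : ZMod n) = y := by
  ext; simp [zf, ZMod.val_natCast, Nat.mod_eq_of_lt y.isLt]

lemma dval_eq (x : ℕ) (y : Fin n) :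
    (y.val + n - x % n) % n = ((y.val : ZMod n) - (x : ZMod n)).val := by
  have hn : 0 < n := Nat.pos_of_ne_zero (NeZero.ne n)
  have hxn : x % n ≤ y.val + n := le_of_lt (lt_of_lt_of_le (Nat.mod_lt x hn) (Nat.le_add_left n _))
  calc (y.val + n - x % n) % n = ((y.val + n - x % n : ℕ) : ZMod n).val := (ZMod.val_natCast _ _).symm
    _ = ((y.val : ZMod n) - (x : ZMod n)).val := by
        congr 1
        rw [Nat.cast_sub hxn]
        push_cast [ZMod.natCast_mod]
        rw [ZMod.natCast_self]
        ring

lemma segRev_eq (x h : ℕ) (η : Fin n → α) (y : Fin n) :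
    segRev x h η y =
      if ((y.val : ZMod n) - (x : ZMod n)).val ≤ h then
        η (zf ((x : ZMod n) + (h : ZMod n) - (y.val : ZMod n) + (x : ZMod n)))
      else η y := by
  have hc := dval_eq (n := n) x y
  by_cases h1 : ((y.val : ZMod n) - (x : ZMod n)).val ≤ h
  · rw [if_pos h1]
    unfold segRev
    rw [if_pos (by rw [hc]; exact h1)]
    congr 1
    ext
    show (x + h - (y.val + n - x % n) % n) % n = _
    rw [hc]
    have hle : ((y.val : ZMod n) - (x : ZMod n)).val ≤ x + h :=
      le_trans h1 (Nat.le_add_left h x)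
    calc (x + h - ((y.val : ZMod n) - (x : ZMod n)).val) % n
        = ((x + h - ((y.val : ZMod n) - (x : ZMod n)).val : ℕ) : ZMod n).val :=
          (ZMod.val_natCast _ _).symm
      _ = ((x : ZMod n) + (h : ZMod n) - (y.val : ZMod n) + (x : ZMod n)).val := by
          congr 1
          rw [Nat.cast_sub hle]
          push_cast [ZMod.natCast_val, ZMod.cast_id]
          ring
  · rw [if_neg h1]
    unfold segRev
    rw [if_neg (by rw [hc]; exact h1)]

lemma segRev_comp (x h : ℕ) (η : Fin n → α) :
    segRev x h η = η ∘ segRev x h (id : Fin n → Fin n) := by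
  funext y
  show segRev x h η y = η (segRev x h id y)
  unfold segRev
  rw [apply_ite η]
  rfl

lemma segRev_invol (x h : ℕ) (η : Fin n → α) :
    segRev x h (segRev x h η) = η := by
  funext y
  rw [segRev_eq]
  by_cases h1 : ((y.val : ZMod n) - (x : ZMod n)).val ≤ h
  · rw [if_pos h1, segRev_eq]
    have hd : (((zf ((x : ZMod n) + (h : ZMod n) - (y.val : ZMod n) + (x : ZMod n))).val
        : ZMod n) - (x : ZMod n)).val ≤ h := by
      rw [zf_cast]
      have he : (x : ZMod n) + (h : ZMod n) - (y.val : ZMod n) + (x : ZMod n) - (x : ZMod n)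
          = ((h - ((y.val : ZMod n) - (x : ZMod n)).val : ℕ) : ZMod n) := by
        rw [Nat.cast_sub h1]
        have hv : ((((y.val : ZMod n) - (x : ZMod n)).val : ℕ) : ZMod n)
            = (y.val : ZMod n) - (x : ZMod n) := by
          simp [ZMod.natCast_val, ZMod.cast_id]
        rw [hv]
        ring
      rw [he, ZMod.val_natCast]
      exact le_trans (Nat.mod_le _ _) (Nat.sub_le _ _)
    rw [if_pos hd, zf_cast]
    have he2 : (x : ZMod n) + (h : ZMod n)
        - ((x : ZMod n) + (h : ZMod n) - (y.val : ZMod n) + (x : ZMod n)) + (x : ZMod n)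
        = (y.val : ZMod n) := by ring
    rw [he2, zf_fin]
  · rw [if_neg h1, segRev_eq, if_neg h1]
end zmod
section core
variable {n : ℕ} [NeZero n]

lemma segRev_apply_r (x h : ℕ) (η : Fin n → Fin n) (c : Fin n) :
    segRev x h η (segRev x h (id : Fin n → Fin n) c) = η c := by
  have hrr : segRev x h (id : Fin n → Fin n) ∘ segRev x h (id : Fin n → Fin n) = id := by
    rw [← segRev_comp]; exact segRev_invol x h id
  conv_lhs => rw [segRev_comp]
  show η (segRev x h (id : Fin n → Fin n) (segRev x h id c)) = η c
  have := congrFun hrr c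
  simp only [Function.comp_apply, id] at this
  rw [this]

lemma val_succ_mod (z : ZMod n) : (z.val + 1) % n = (z + 1).val := by
  have : z + 1 = (((z.val + 1 : ℕ)) : ZMod n) := by
    push_cast [ZMod.natCast_val, ZMod.cast_id]; ring
  rw [this, ZMod.val_natCast]

lemma good_x (ℓ x : ℕ) (hℓn : ℓ ≤ n) (η : Fin n → Fin n) (a b : Fin n)
    (hb : (a.val + 1) % n = b.val)
    (hv : ((η a).val = 0 ∧ (η b).val = 1) ∨ ((η a).val = 1 ∧ (η b).val = 0))
    (hx1 : (x : ZMod n) ≠ (a.val : ZMod n) + 1)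
    (hx2 : (x : ZMod n) ≠ (a.val : ZMod n) - (ℓ : ZMod n)) :
    adjLet (segRev x ℓ η) := by
  set X := ((x : ℕ) : ZMod n) with hX
  set A := ((a.val : ℕ) : ZMod n) with hA
  set B := ((b.val : ℕ) : ZMod n) with hB0
  have hB : B = A + 1 := by
    rw [hB0, ← hb, ZMod.natCast_mod]; push_cast; ring
  set k := (A - X).val with hk
  have hkcast : ((k : ℕ) : ZMod n) = A - X := by
    rw [hk]; simp [ZMod.natCast_val, ZMod.cast_id]
  have hkn : k < n := ZMod.val_lt _
  have hn1 : 1 ≤ n := Nat.one_le_iff_ne_zero.mpr (NeZero.ne n)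
  have hk1 : k ≠ n - 1 := by
    intro hke
    apply hx1
    have : A - X = -1 := by
      rw [← hkcast, hke, Nat.cast_sub hn1, ZMod.natCast_self]; ring
    linear_combination -this
  have hk2 : k ≠ ℓ % n := by
    intro hke
    apply hx2
    have : A - X = (ℓ : ZMod n) := by
      rw [← hkcast, hke, ZMod.natCast_mod]
    linear_combination -this
  have hk1' : k + 1 < n := by omega
  have hkb : (B - X).val = k + 1 := by
    have : B - X = (((k + 1 : ℕ)) : ZMod n) := by
      rw [hB]; push_cast [hkcast]; ring
    rw [this, ZMod.val_natCast, Nat.mod_eq_of_lt hk1']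
  rcases lt_trichotomy k ℓ with hkl | hkl | hkl
  · -- both endpoints inside the reversed segment
    have hcb : (B - X).val ≤ ℓ := by omega
    have hca : (A - X).val ≤ ℓ := by omega
    have hra : segRev x ℓ (id : Fin n → Fin n) a = zf (X + (ℓ : ZMod n) - A + X) := by
      rw [segRev_eq, if_pos hca]; rfl
    have hrb : segRev x ℓ (id : Fin n → Fin n) b = zf (X + (ℓ : ZMod n) - B + X) := by
      rw [segRev_eq, if_pos hcb]; rfl
    have hza : segRev x ℓ η (zf (X + (ℓ : ZMod n) - A + X)) = η a := by
      rw [← hra]; exact segRev_apply_r x ℓ η a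
    have hzb : segRev x ℓ η (zf (X + (ℓ : ZMod n) - B + X)) = η b := by
      rw [← hrb]; exact segRev_apply_r x ℓ η b
    have hadj : ((zf (X + (ℓ : ZMod n) - B + X)).val + 1) % n
        = (zf (X + (ℓ : ZMod n) - A + X)).val := by
      show ((X + (ℓ : ZMod n) - B + X).val + 1) % n = (X + (ℓ : ZMod n) - A + X).val
      rw [val_succ_mod]
      congr 1
      rw [hB]; ring
    rcases hv with ⟨h0, h1⟩ | ⟨h1, h0⟩
    · exact ⟨_, _, by rw [hza]; exact h0, by rw [hzb]; exact h1, Or.inr hadj⟩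
    · exact ⟨_, _, by rw [hzb]; exact h0, by rw [hza]; exact h1, Or.inl hadj⟩
  · exfalso
    apply hk2
    rw [Nat.mod_eq_of_lt (hkl ▸ hkn)]
    exact hkl
  · -- both endpoints outside: configuration unchanged there
    have hca : ¬ (A - X).val ≤ ℓ := by omega
    have hcb : ¬ (B - X).val ≤ ℓ := by omega
    have hza : segRev x ℓ η a = η a := by rw [segRev_eq, if_neg hca]
    have hzb : segRev x ℓ η b = η b := by rw [segRev_eq, if_neg hcb]
    rcases hv with ⟨h0, h1⟩ | ⟨h1, h0⟩
    · exact ⟨a, b, by rw [hza]; exact h0, by rw [hzb]; exact h1, Or.inl hb⟩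
    · exact ⟨b, a, by rw [hzb]; exact h0, by rw [hza]; exact h1, Or.inr hb⟩

lemma card_bad (ℓ : ℕ) (hℓn : ℓ ≤ n) (η : Fin n → Fin n) (hadj : adjLet η) :
    ((Finset.range n).filter (fun x => ¬ adjLet (segRev x ℓ η))).card ≤ 2 := by
  obtain ⟨p, q, hp0, hq1, hpq⟩ := hadj
  obtain ⟨a, b, hb, hv⟩ :
      ∃ a b : Fin n, (a.val + 1) % n = b.val ∧
        (((η a).val = 0 ∧ (η b).val = 1) ∨ ((η a).val = 1 ∧ (η b).val = 0)) := by
    rcases hpq with h | h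
    · exact ⟨p, q, h, Or.inl ⟨hp0, hq1⟩⟩
    · exact ⟨q, p, h, Or.inr ⟨hq1, hp0⟩⟩
  have hsub : (Finset.range n).filter (fun x => ¬ adjLet (segRev x ℓ η)) ⊆
      {((a.val : ZMod n) + 1).val, ((a.val : ZMod n) - (ℓ : ZMod n)).val} := by
    intro x hx
    rw [Finset.mem_filter, Finset.mem_range] at hx
    obtain ⟨hxn, hnadj⟩ := hx
    by_contra hmem
    rw [Finset.mem_insert, Finset.mem_singleton] at hmem
    push_neg at hmem
    refine hnadj (good_x ℓ x hℓn η a b hb hv ?_ ?_)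
    · intro hc
      exact hmem.1 (by rw [← Nat.mod_eq_of_lt hxn, ← ZMod.val_natCast, hc])
    · intro hc
      exact hmem.2 (by rw [← Nat.mod_eq_of_lt hxn, ← ZMod.val_natCast, hc])
  exact le_trans (Finset.card_le_card hsub)
    (le_trans (Finset.card_insert_le _ _) (by simp))
end core
section count
open Finset
variable {n : ℕ}

private def fib (z0 z1 p q : Fin n) : Finset (Equiv.Perm (Fin n)) :=
  univ.filter (fun η => η p = z0 ∧ η q = z1)

lemma fib_card_eq (z0 z1 p q p' q' : Fin n) (hpq : p ≠ q) (hpq' : p' ≠ q') :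
    (fib z0 z1 p q).card = (fib z0 z1 p' q').card := by
  set σ1 := Equiv.swap p' p with hσ1
  have hσ1p : σ1 p' = p := Equiv.swap_apply_left _ _
  have hq'' : σ1 q' ≠ p := by
    intro h
    exact hpq' (σ1.injective (h.trans hσ1p.symm)).symm
  set σ2 := Equiv.swap (σ1 q') q with hσ2
  set π := σ2 * σ1 with hπ
  have hπp : π p' = p := by
    show σ2 (σ1 p') = p
    rw [hσ1p]
    exact Equiv.swap_apply_of_ne_of_ne (Ne.symm hq'') hpq
  have hπq : π q' = q := by
    show σ2 (σ1 q') = q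
    exact Equiv.swap_apply_left _ _
  refine Finset.card_bij' (fun η _ => η * π) (fun η _ => η * π⁻¹) ?_ ?_ ?_ ?_
  · intro η hη
    rw [fib, mem_filter] at hη ⊢
    refine ⟨mem_univ _, ?_, ?_⟩
    · show η (π p') = z0; rw [hπp]; exact hη.2.1
    · show η (π q') = z1; rw [hπq]; exact hη.2.2
  · intro η hη
    rw [fib, mem_filter] at hη ⊢
    have h1 : π⁻¹ p = p' := by rw [← hπp]; exact π.symm_apply_apply p'
    have h2 : π⁻¹ q = q' := by rw [← hπq]; exact π.symm_apply_apply q'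
    refine ⟨mem_univ _, ?_, ?_⟩
    · show η (π⁻¹ p) = z0; rw [h1]; exact hη.2.1
    · show η (π⁻¹ q) = z1; rw [h2]; exact hη.2.2
  · intro η _; group
  · intro η _; group

lemma filter_eq_fib (z0 z1 : Fin n) (pq : Fin n × Fin n) :
    univ.filter (fun η : Equiv.Perm (Fin n) => (η.symm z0, η.symm z1) = pq)
      = fib z0 z1 pq.1 pq.2 := by
  apply Finset.filter_congr
  intro η _
  rw [Prod.ext_iff]
  simp only [Equiv.symm_apply_eq]
  constructor
  · rintro ⟨h1, h2⟩; rw [← h1, ← h2]; exact ⟨rfl, rfl⟩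
  · rintro ⟨h1, h2⟩; rw [h1, h2]; exact ⟨rfl, rfl⟩

lemma succ_mod_inj {q q' p : ℕ} (hq : q < n) (hq' : q' < n)
    (h1 : (q + 1) % n = p) (h2 : (q' + 1) % n = p) : q = q' := by
  have e1 : (q + 1) % n = if q + 1 = n then 0 else q + 1 := by
    split
    · rename_i h; rw [h, Nat.mod_self]
    · exact Nat.mod_eq_of_lt (by omega)
  have e2 : (q' + 1) % n = if q' + 1 = n then 0 else q' + 1 := by
    split
    · rename_i h; rw [h, Nat.mod_self]
    · exact Nat.mod_eq_of_lt (by omega)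
  rw [e1] at h1; rw [e2] at h2
  split at h1 <;> split at h2 <;> omega

lemma count_bound (hn : 3 ≤ n) :
    ((univ.filter (fun η : Equiv.Perm (Fin n) => adjLet ⇑η)).card) * (n * n - n)
      ≤ 2 * n * n.factorial := by
  have h0n : 0 < n := by omega
  have h1n : 1 < n := by omega
  set z0 : Fin n := ⟨0, h0n⟩ with hz0
  set z1 : Fin n := ⟨1, h1n⟩ with hz1
  have hz01 : z0 ≠ z1 := by
    intro h; rw [Fin.ext_iff] at h; simp [hz0, hz1] at h
  set c := (fib z0 z1 z0 z1).card with hc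
  set f : Equiv.Perm (Fin n) → Fin n × Fin n := fun η => (η.symm z0, η.symm z1) with hf
  have hfd : ∀ η : Equiv.Perm (Fin n), f η ∈ (univ : Finset (Fin n)).offDiag := by
    intro η
    rw [Finset.mem_offDiag]
    exact ⟨mem_univ _, mem_univ _, fun h => hz01 (η.symm.injective h)⟩
  -- total count: n! = (n² − n) · c
  have htot : n.factorial = (n * n - n) * c := by
    have h1 : (univ : Finset (Equiv.Perm (Fin n))).card
        = ∑ pq ∈ (univ : Finset (Fin n)).offDiag,
            (univ.filter (fun η => f η = pq)).card :=
      Finset.card_eq_sum_card_fiberwise (fun η _ => hfd η)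
    have h2 : ∀ pq ∈ (univ : Finset (Fin n)).offDiag,
        (univ.filter (fun η : Equiv.Perm (Fin n) => f η = pq)).card = c := by
      intro pq hpq
      rw [Finset.mem_offDiag] at hpq
      rw [filter_eq_fib]
      exact fib_card_eq z0 z1 pq.1 pq.2 z0 z1 hpq.2.2 hz01
    rw [Finset.sum_congr rfl h2, Finset.sum_const, smul_eq_mul] at h1
    have h3 : (univ : Finset (Equiv.Perm (Fin n))).card = n.factorial := by
      rw [Finset.card_univ, Fintype.card_perm, Fintype.card_fin]
    have h4 : ((univ : Finset (Fin n)).offDiag).card = n * n - n := by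
      rw [Finset.offDiag_card, Finset.card_univ, Fintype.card_fin]
    rw [h3, h4] at h1
    exact h1
  -- adjacency pairs
  set AdjP : Finset (Fin n × Fin n) :=
    (univ : Finset (Fin n)).offDiag.filter
      (fun pq => (pq.1.val + 1) % n = pq.2.val ∨ (pq.2.val + 1) % n = pq.1.val) with hAdjP
  have hAdjPcard : AdjP.card ≤ 2 * n := by
    have hinj : Set.InjOn (fun pq : Fin n × Fin n =>
        (pq.1, decide ((pq.1.val + 1) % n = pq.2.val))) AdjP := by
      intro pq hpq pq' hpq' heq
      simp only [Finset.coe_filter, Set.mem_setOf_eq, hAdjP, Finset.mem_coe,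
        Finset.mem_filter] at hpq hpq'
      rw [Prod.ext_iff] at heq
      obtain ⟨he1, he2⟩ := heq
      simp only at he1 he2
      have hd := decide_eq_decide.mp he2
      rcases Decidable.em ((pq.1.val + 1) % n = pq.2.val) with h | h
      · have h' : (pq'.1.val + 1) % n = pq'.2.val := hd.mp h
        have : pq.2.val = pq'.2.val := by rw [← h, ← h', he1]
        exact Prod.ext he1 (Fin.ext this)
      · have h' : ¬ (pq'.1.val + 1) % n = pq'.2.val := fun hh => h (hd.mpr hh)
        have hq : (pq.2.val + 1) % n = pq.1.val := hpq.2.resolve_left h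
        have hq' : (pq'.2.val + 1) % n = pq'.1.val := hpq'.2.resolve_left h'
        rw [← he1] at hq'
        exact Prod.ext he1 (Fin.ext (succ_mod_inj pq.2.isLt pq'.2.isLt hq hq'))
    have := Finset.card_le_card_of_injOn _ (fun pq _ => Finset.mem_univ _) hinj
    calc AdjP.card ≤ (univ : Finset (Fin n × Bool)).card := this
      _ = 2 * n := by
          rw [Finset.card_univ, Fintype.card_prod, Fintype.card_fin, Fintype.card_bool]
          ring
  -- A.card ≤ AdjP.card * c
  set A := univ.filter (fun η : Equiv.Perm (Fin n) => adjLet ⇑η) with hA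
  have hAcard : A.card ≤ AdjP.card * c := by
    have h1 : A.card = ∑ pq ∈ AdjP, (A.filter (fun η => f η = pq)).card := by
      apply Finset.card_eq_sum_card_fiberwise
      intro η hη
      simp only [hA, Finset.mem_coe, mem_filter] at hη
      obtain ⟨x, y, hx, hy, hadj⟩ := hη.2
      have hxz : η x = z0 := Fin.ext (by rw [hx])
      have hyz : η y = z1 := Fin.ext (by rw [hy])
      rw [Finset.mem_coe, hAdjP, mem_filter]
      refine ⟨hfd η, ?_⟩
      have hx' : η.symm z0 = x := by rw [← hxz]; exact η.symm_apply_apply x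
      have hy' : η.symm z1 = y := by rw [← hyz]; exact η.symm_apply_apply y
      have hfe : f η = (x, y) := by rw [hf]; exact Prod.ext hx' hy'
      rw [hfe]
      exact hadj
    rw [h1]
    calc ∑ pq ∈ AdjP, (A.filter (fun η => f η = pq)).card
        ≤ ∑ pq ∈ AdjP, c := by
          apply Finset.sum_le_sum
          intro pq hpq
          rw [hAdjP, mem_filter] at hpq
          rw [mem_offDiag] at hpq
          have hsub : A.filter (fun η => f η = pq) ⊆ fib z0 z1 pq.1 pq.2 := by
            rw [← filter_eq_fib]
            intro η hη
            rw [mem_filter] at hη ⊢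
            exact ⟨mem_univ _, hη.2⟩
          calc (A.filter (fun η => f η = pq)).card
              ≤ (fib z0 z1 pq.1 pq.2).card := Finset.card_le_card hsub
            _ = c := fib_card_eq z0 z1 pq.1 pq.2 z0 z1 hpq.1.2.2 hz01
      _ = AdjP.card * c := by rw [Finset.sum_const, smul_eq_mul]
  calc A.card * (n * n - n) ≤ (2 * n * c) * (n * n - n) := by
        apply Nat.mul_le_mul_right
        exact le_trans hAcard (Nat.mul_le_mul_right c hAdjPcard)
    _ = 2 * n * ((n * n - n) * c) := by ring
    _ = 2 * n * n.factorial := by rw [← htot]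
end count
section sums
open Finset
variable {n : ℕ} [NeZero n]

lemma segRev_r_invol (x h : ℕ) :
    Function.Involutive (segRev x h (id : Fin n → Fin n)) := by
  intro y
  have hrr : segRev x h (id : Fin n → Fin n) ∘ segRev x h (id : Fin n → Fin n) = id := by
    rw [← segRev_comp]; exact segRev_invol x h id
  exact congrFun hrr y

lemma sq_eq (p q : Prop) [Decidable p] [Decidable q] :
    ((if p then (1 : ℝ) else 0) - (if q then (1 : ℝ) else 0)) ^ 2
      = (if q ∧ ¬p then (1 : ℝ) else 0) + (if p ∧ ¬q then (1 : ℝ) else 0) := by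
  by_cases hp : p <;> by_cases hq : q <;> simp [hp, hq]

lemma sum_sq_eq (x ℓ : ℕ) :
    ∑ η : Equiv.Perm (Fin n), (chiInd (segRev x ℓ ⇑η) - chiInd ⇑η) ^ 2
      = 2 * ∑ η : Equiv.Perm (Fin n),
          (if adjLet ⇑η ∧ ¬ adjLet (segRev x ℓ ⇑η) then (1 : ℝ) else 0) := by
  set τ : Equiv.Perm (Fin n) := Function.Involutive.toPerm _ (segRev_r_invol x ℓ) with hτdef
  have hτ : ⇑τ = segRev x ℓ (id : Fin n → Fin n) := rfl
  have key1 : ∀ η : Equiv.Perm (Fin n), ⇑(η * τ) = segRev x ℓ ⇑η := by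
    intro η
    rw [Equiv.Perm.coe_mul, hτ, ← segRev_comp]
  have key2 : ∀ η : Equiv.Perm (Fin n), segRev x ℓ ⇑(η * τ) = ⇑η := by
    intro η
    rw [key1, segRev_invol]
  have e1 : ∑ η : Equiv.Perm (Fin n), (chiInd (segRev x ℓ ⇑η) - chiInd ⇑η) ^ 2
      = ∑ η : Equiv.Perm (Fin n),
          ((if adjLet ⇑η ∧ ¬ adjLet (segRev x ℓ ⇑η) then (1 : ℝ) else 0)
            + (if adjLet (segRev x ℓ ⇑η) ∧ ¬ adjLet ⇑η then (1 : ℝ) else 0)) := by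
    refine Finset.sum_congr rfl ?_
    intro η _
    exact sq_eq (adjLet (segRev x ℓ ⇑η)) (adjLet ⇑η)
  rw [e1, Finset.sum_add_distrib]
  have e2 : ∑ η : Equiv.Perm (Fin n),
      (if adjLet (segRev x ℓ ⇑η) ∧ ¬ adjLet ⇑η then (1 : ℝ) else 0)
      = ∑ η : Equiv.Perm (Fin n),
          (if adjLet ⇑η ∧ ¬ adjLet (segRev x ℓ ⇑η) then (1 : ℝ) else 0) := by
    apply Fintype.sum_equiv (Equiv.mulRight τ)
    intro η
    have h1 : adjLet (segRev x ℓ ⇑η) ↔ adjLet ⇑(η * τ) := by rw [key1]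
    have h2 : adjLet ⇑η ↔ adjLet (segRev x ℓ ⇑(η * τ)) := by rw [key2]
    simp only [Equiv.coe_mulRight]
    exact if_congr (and_congr h1 (not_congr h2)) rfl rfl
  rw [e2]
  ring

lemma sum_x_bound (ℓ : ℕ) (hℓn : ℓ ≤ n) :
    ∑ x ∈ Finset.range n, ∑ η : Equiv.Perm (Fin n),
        (if adjLet ⇑η ∧ ¬ adjLet (segRev x ℓ ⇑η) then (1 : ℝ) else 0)
      ≤ 2 * ((univ.filter (fun η : Equiv.Perm (Fin n) => adjLet ⇑η)).card : ℝ) := by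
  rw [Finset.sum_comm]
  have step1 : ∀ η : Equiv.Perm (Fin n),
      ∑ x ∈ Finset.range n, (if adjLet ⇑η ∧ ¬ adjLet (segRev x ℓ ⇑η) then (1 : ℝ) else 0)
        ≤ (if adjLet ⇑η then (2 : ℝ) else 0) := by
    intro η
    by_cases hη : adjLet ⇑η
    · simp only [hη, true_and, if_true]
      rw [Finset.sum_boole]
      exact_mod_cast card_bad ℓ hℓn ⇑η hη
    · simp [hη]
  calc ∑ η : Equiv.Perm (Fin n), ∑ x ∈ Finset.range n,
        (if adjLet ⇑η ∧ ¬ adjLet (segRev x ℓ ⇑η) then (1 : ℝ) else 0)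
      ≤ ∑ η : Equiv.Perm (Fin n), (if adjLet ⇑η then (2 : ℝ) else 0) :=
        Finset.sum_le_sum (fun η _ => step1 η)
    _ = 2 * ((univ.filter (fun η : Equiv.Perm (Fin n) => adjLet ⇑η)).card : ℝ) := by
        have : ∀ η : Equiv.Perm (Fin n),
            (if adjLet ⇑η then (2 : ℝ) else 0) = 2 * (if adjLet ⇑η then (1 : ℝ) else 0) := by
          intro η; split <;> ring
        rw [Finset.sum_congr rfl (fun η _ => this η), ← Finset.mul_sum, Finset.sum_boole]
end sums

theorem adjacency_dirichlet_bound (n L : ℕ) (hn : 3 ≤ n) (hL1 : 1 ≤ L) (hLn : L ≤ n) :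
    dirL n L (chiInd (n := n)) ≤ 16 / ((n : ℝ) * ((n : ℝ) - 1)) := by
  haveI : NeZero n := ⟨by omega⟩
  set A : ℕ := (Finset.univ.filter (fun η : Equiv.Perm (Fin n) => adjLet ⇑η)).card with hA
  have hcount : (A : ℝ) * ((n : ℝ) * (n : ℝ) - (n : ℝ)) ≤ 2 * n * (n.factorial : ℝ) := by
    have h := count_bound (n := n) hn
    have hnn : n ≤ n * n := Nat.le_mul_of_pos_left n (by omega)
    have := (Nat.cast_le (α := ℝ)).mpr h
    push_cast [Nat.cast_sub hnn] at this
    convert this using 2 <;> push_cast <;> ring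
  have hfac : (0 : ℝ) < (n.factorial : ℝ) := by
    exact_mod_cast Nat.factorial_pos n
  have hnR : (0 : ℝ) < (n : ℝ) := by exact_mod_cast Nat.lt_of_lt_of_le (by omega) hn
  have hLR : (0 : ℝ) < (L : ℝ) := by exact_mod_cast hL1
  have hn1 : (0 : ℝ) < (n : ℝ) - 1 := by
    have : (3 : ℝ) ≤ (n : ℝ) := by exact_mod_cast hn
    linarith
  unfold dirL
  have e1 : ∑ x ∈ Finset.range n, ∑ ℓ ∈ Finset.Icc 1 L,
      (∑ η : Equiv.Perm (Fin n), (chiInd (segRev x ℓ ⇑η) - chiInd ⇑η) ^ 2)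
        / (Nat.factorial n : ℝ)
      = ∑ ℓ ∈ Finset.Icc 1 L,
          (2 * ∑ x ∈ Finset.range n, ∑ η : Equiv.Perm (Fin n),
            (if adjLet ⇑η ∧ ¬ adjLet (segRev x ℓ ⇑η) then (1 : ℝ) else 0))
            / (Nat.factorial n : ℝ) := by
    rw [Finset.sum_comm]
    refine Finset.sum_congr rfl fun ℓ _ => ?_
    calc ∑ x ∈ Finset.range n,
          (∑ η : Equiv.Perm (Fin n), (chiInd (segRev x ℓ ⇑η) - chiInd ⇑η) ^ 2)
            / (Nat.factorial n : ℝ)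
        = ∑ x ∈ Finset.range n,
            (2 * ∑ η : Equiv.Perm (Fin n),
              (if adjLet ⇑η ∧ ¬ adjLet (segRev x ℓ ⇑η) then (1 : ℝ) else 0))
              / (Nat.factorial n : ℝ) :=
          Finset.sum_congr rfl (fun x _ => by rw [sum_sq_eq])
      _ = (∑ x ∈ Finset.range n, 2 * ∑ η : Equiv.Perm (Fin n),
              (if adjLet ⇑η ∧ ¬ adjLet (segRev x ℓ ⇑η) then (1 : ℝ) else 0))
              / (Nat.factorial n : ℝ) := (Finset.sum_div _ _ _).symm
      _ = _ := by rw [← Finset.mul_sum]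
  rw [e1]
  have e2 : ∀ ℓ ∈ Finset.Icc 1 L,
      (2 * ∑ x ∈ Finset.range n, ∑ η : Equiv.Perm (Fin n),
        (if adjLet ⇑η ∧ ¬ adjLet (segRev x ℓ ⇑η) then (1 : ℝ) else 0))
        / (Nat.factorial n : ℝ)
      ≤ (4 * (A : ℝ)) / (Nat.factorial n : ℝ) := by
    intro ℓ hℓ
    rw [Finset.mem_Icc] at hℓ
    have hb := sum_x_bound (n := n) ℓ (le_trans hℓ.2 hLn)
    rw [← hA] at hb
    exact (div_le_div_iff_of_pos_right hfac).mpr (by linarith)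
  calc (1 / (2 * (n : ℝ) * (L : ℝ))) * ∑ ℓ ∈ Finset.Icc 1 L,
        (2 * ∑ x ∈ Finset.range n, ∑ η : Equiv.Perm (Fin n),
          (if adjLet ⇑η ∧ ¬ adjLet (segRev x ℓ ⇑η) then (1 : ℝ) else 0))
          / (Nat.factorial n : ℝ)
      ≤ (1 / (2 * (n : ℝ) * (L : ℝ)))
          * ∑ ℓ ∈ Finset.Icc 1 L, (4 * (A : ℝ)) / (Nat.factorial n : ℝ) := by
        apply mul_le_mul_of_nonneg_left (Finset.sum_le_sum e2)
        positivity
    _ = (1 / (2 * (n : ℝ) * (L : ℝ)))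
          * ((L : ℝ) * ((4 * (A : ℝ)) / (Nat.factorial n : ℝ))) := by
        rw [Finset.sum_const, Nat.card_Icc, nsmul_eq_mul]
        norm_num
    _ ≤ 16 / ((n : ℝ) * ((n : ℝ) - 1)) := by
        have hLHS : (1 / (2 * (n : ℝ) * (L : ℝ)))
            * ((L : ℝ) * ((4 * (A : ℝ)) / (Nat.factorial n : ℝ)))
            = 2 * (A : ℝ) / ((n : ℝ) * (Nat.factorial n : ℝ)) := by
          field_simp
          ring
        rw [hLHS, div_le_div_iff₀ (by positivity) (by positivity)]
        nlinarith [hcount, mul_nonneg hnR.le hfac.le]
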